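/- (Lemma relating V and 𝒱) Let G be a connected graph on n ≥ 2 vertices, V(x) = (1/2)Σ_{(i,j)∈E}(x_i-x_j)², and 𝒱(x) = max_i x_i - min_i x_i. For any x̂, x̄ ∈ ℝ^n and any 0 < γ < 1: if V(x̄) ≤ 4γ²·V(x̂)/(n²(n-1)) then 𝒱(x̄) ≤ γ·𝒱(x̂). -/

import Mathlib

open Finset SimpleGraph

private lemma list_cs (l : List ℝ) :
    l.sum ^ 2 ≤ (l.length : ℝ) * (l.map (fun t => t ^ 2)).sum := by
  have h1 : List.ofFn l.get = l := List.ofFn_get l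
  have habs : |l.sum| ≤ ∑ i : Fin l.length, |l.get i| := by
    conv_lhs => rw [← h1]
    rw [List.sum_ofFn]
    exact Finset.abs_sum_le_sum_abs _ _
  have hcs : (∑ i : Fin l.length, |l.get i|) ^ 2 ≤
      (l.length : ℝ) * ∑ i : Fin l.length, |l.get i| ^ 2 := by
    have := sq_sum_le_card_mul_sum_sq (s := (univ : Finset (Fin l.length)))
      (f := fun i => |l.get i|)
    simpa using this
  have hmap : (l.map (fun t => t ^ 2)).sum = ∑ i : Fin l.length, |l.get i| ^ 2 := by
    conv_lhs => rw [← h1, List.map_ofFn]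
    rw [List.sum_ofFn]
    simp [Function.comp, sq_abs]
  rw [hmap]
  calc l.sum ^ 2 = |l.sum| ^ 2 := (sq_abs _).symm
    _ ≤ (∑ i : Fin l.length, |l.get i|) ^ 2 := by
        apply pow_le_pow_left₀ (abs_nonneg _) habs
    _ ≤ _ := hcs

private lemma walk_telescope {n : ℕ} {G : SimpleGraph (Fin n)} (x : Fin n → ℝ)
    {a b : Fin n} (w : G.Walk a b) :
    x a - x b = (w.darts.map (fun d => x d.toProd.1 - x d.toProd.2)).sum := by
  induction w with
  | nil => simp
  | cons h p ih => rw [Walk.darts_cons, List.map_cons, List.sum_cons, ← ih]; ring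

private lemma F_nonneg {n : ℕ} (x : Fin n → ℝ) (e : Sym2 (Fin n)) :
    0 ≤ Sym2.lift ⟨fun i j => (x i - x j) ^ 2, fun i j => by ring⟩ e := by
  induction e using Sym2.inductionOn with
  | hf i j => simpa using sq_nonneg (x i - x j)

private lemma lower_bound {n : ℕ} (G : SimpleGraph (Fin n)) [DecidableRel G.Adj]
    (hconn : G.Connected) (x : Fin n → ℝ) (a b : Fin n) :
    (x a - x b) ^ 2 ≤ ((n : ℝ) - 1) *
      ∑ e ∈ G.edgeFinset, Sym2.lift ⟨fun i j => (x i - x j) ^ 2, fun i j => by ring⟩ e := by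
  classical
  have hn : 1 ≤ n := by
    have := Fin.pos_iff_nonempty.mpr ⟨a⟩; omega
  obtain ⟨w⟩ := hconn.preconnected a b
  set p : G.Walk a b := w.toPath.1 with hp
  have hpath : p.IsPath := w.toPath.2
  set F : Sym2 (Fin n) → ℝ := Sym2.lift ⟨fun i j => (x i - x j) ^ 2, fun i j => by ring⟩ with hF
  set l : List ℝ := p.darts.map (fun d => x d.toProd.1 - x d.toProd.2) with hl
  have htel : x a - x b = l.sum := walk_telescope x p
  have hlen : (l.length : ℝ) ≤ (n : ℝ) - 1 := by
    have h1 : p.length < n := by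
      simpa using hpath.length_lt
    have h2 : l.length = p.length := by simp [hl]
    rw [h2]
    have : (p.length : ℝ) + 1 ≤ (n : ℝ) := by exact_mod_cast h1
    linarith
  have hmapsq : (l.map (fun t => t ^ 2)).sum = (p.edges.map F).sum := by
    rw [hl, List.map_map]
    have : p.edges.map F = p.darts.map (F ∘ Dart.edge) := by
      rw [Walk.edges, List.map_map]
    rw [this]
    congr 1
  have hnodup : p.edges.Nodup := hpath.isTrail.edges_nodup
  have hedge : (p.edges.map F).sum = ∑ e ∈ p.edges.toFinset, F e :=
    (List.sum_toFinset F hnodup).symm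
  have hsub : p.edges.toFinset ⊆ G.edgeFinset := by
    intro e he
    rw [List.mem_toFinset] at he
    rw [mem_edgeFinset]
    exact p.edges_subset_edgeSet he
  have hle : ∑ e ∈ p.edges.toFinset, F e ≤ ∑ e ∈ G.edgeFinset, F e :=
    Finset.sum_le_sum_of_subset_of_nonneg hsub (fun e _ _ => F_nonneg x e)
  have hsumnn : 0 ≤ (l.map (fun t => t ^ 2)).sum := by
    apply List.sum_nonneg
    intro t ht
    obtain ⟨u, _, rfl⟩ := List.mem_map.1 ht
    positivity
  calc (x a - x b) ^ 2 = l.sum ^ 2 := by rw [htel]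
    _ ≤ (l.length : ℝ) * (l.map (fun t => t ^ 2)).sum := list_cs l
    _ ≤ ((n : ℝ) - 1) * (l.map (fun t => t ^ 2)).sum :=
        mul_le_mul_of_nonneg_right hlen hsumnn
    _ = ((n : ℝ) - 1) * ∑ e ∈ p.edges.toFinset, F e := by rw [hmapsq, hedge]
    _ ≤ ((n : ℝ) - 1) * ∑ e ∈ G.edgeFinset, F e := by
        apply mul_le_mul_of_nonneg_left hle
        have : (1 : ℝ) ≤ (n : ℝ) := by exact_mod_cast hn
        linarith

private lemma double_sum_identity {n : ℕ} (y : Fin n → ℝ) :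
    ∑ i, ∑ j, (y i - y j)^2 = 2*(n:ℝ)*(∑ i, y i^2) - 2*(∑ i, y i)^2 := by
  set S1 := ∑ i, y i with hS1
  set S2 := ∑ i, y i ^ 2 with hS2
  have inner : ∀ i, ∑ j, (y i - y j)^2 = (n:ℝ) * y i^2 + S2 - 2*(y i * S1) := by
    intro i
    calc ∑ j, (y i - y j)^2 = ∑ j, (y i^2 + y j^2 - 2*(y i * y j)) := by
          apply Finset.sum_congr rfl; intros; ring
      _ = (∑ _j : Fin n, y i ^2) + S2 - ∑ j, 2*(y i * y j) := by
          rw [Finset.sum_sub_distrib, Finset.sum_add_distrib]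
      _ = (n:ℝ) * y i^2 + S2 - 2*(y i * S1) := by
          rw [Finset.sum_const, card_univ, Fintype.card_fin, nsmul_eq_mul, ← Finset.mul_sum,
            ← Finset.mul_sum]
  calc ∑ i, ∑ j, (y i - y j)^2 = ∑ i, ((n:ℝ) * y i^2 + S2 - 2*(y i * S1)) := by
        apply Finset.sum_congr rfl; intro i _; exact inner i
    _ = (n:ℝ) * S2 + (n:ℝ) * S2 - 2*(S1 * S1) := by
        rw [Finset.sum_sub_distrib, Finset.sum_add_distrib, ← Finset.mul_sum,
          Finset.sum_const, card_univ, Fintype.card_fin, nsmul_eq_mul, ← Finset.mul_sum,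
          ← Finset.sum_mul]
    _ = 2*(n:ℝ)*S2 - 2*S1^2 := by ring

private lemma dart_sum {n : ℕ} (G : SimpleGraph (Fin n)) [DecidableRel G.Adj]
    (F : Sym2 (Fin n) → ℝ) :
    ∑ d : G.Dart, F d.edge = 2 * ∑ e ∈ G.edgeFinset, F e := by
  classical
  rw [← Finset.sum_fiberwise_of_maps_to (g := SimpleGraph.Dart.edge) (t := G.edgeFinset)
    (fun d _ => by rw [mem_edgeFinset]; exact d.edge_mem) (fun d => F d.edge)]
  rw [Finset.mul_sum]
  apply Finset.sum_congr rfl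
  intro e he
  have hcard : (univ.filter fun d : G.Dart => d.edge = e).card = 2 := by
    have := G.dart_edge_fiber_card e (mem_edgeFinset.1 he)
    convert this using 2
  rw [Finset.sum_congr rfl (fun d hd => by rw [(Finset.mem_filter.1 hd).2])]
  rw [Finset.sum_const, hcard, nsmul_eq_mul]
  norm_num

private lemma upper_bound {n : ℕ} (G : SimpleGraph (Fin n)) [DecidableRel G.Adj]
    (x : Fin n → ℝ) (M m : ℝ) (hb : ∀ i, m ≤ x i ∧ x i ≤ M) :
    ∑ e ∈ G.edgeFinset, Sym2.lift ⟨fun i j => (x i - x j) ^ 2, fun i j => by ring⟩ e ≤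
      (n:ℝ)^2 * (M - m)^2 / 4 := by
  classical
  set F : Sym2 (Fin n) → ℝ := Sym2.lift ⟨fun i j => (x i - x j) ^ 2, fun i j => by ring⟩ with hF
  have h1 : ∑ d : G.Dart, F d.edge = 2 * ∑ e ∈ G.edgeFinset, F e := dart_sum G F
  have h2 : ∀ d : G.Dart, F d.edge = (x d.toProd.1 - x d.toProd.2)^2 := by
    rintro ⟨⟨a, b⟩, hab⟩
    rfl
  set c : ℝ := (M + m) / 2 with hc
  set y : Fin n → ℝ := fun i => x i - c with hy
  have h3 : ∑ d : G.Dart, F d.edge ≤ ∑ p ∈ univ ×ˢ univ, (x p.1 - x p.2)^2 := by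
    rw [Finset.sum_congr rfl (fun d _ => h2 d)]
    rw [← Finset.sum_image (f := fun p : Fin n × Fin n => (x p.1 - x p.2)^2)
      (g := SimpleGraph.Dart.toProd) (fun a _ b _ h => SimpleGraph.Dart.toProd_injective h)]
    exact Finset.sum_le_sum_of_subset_of_nonneg (Finset.subset_univ _)
      (fun p _ _ => sq_nonneg _)
  have h4 : ∑ p ∈ univ ×ˢ univ, (x p.1 - x p.2)^2 = ∑ i, ∑ j, (y i - y j)^2 := by
    rw [Finset.sum_product]
    apply Finset.sum_congr rfl; intro i _
    apply Finset.sum_congr rfl; intro j _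
    simp only [hy]; ring
  have h5 : ∑ i, ∑ j, (y i - y j)^2 ≤ 2*(n:ℝ)*(∑ i, y i^2) := by
    rw [double_sum_identity y]
    nlinarith [sq_nonneg (∑ i, y i)]
  have h6 : ∑ i, y i^2 ≤ (n:ℝ) * ((M - m)/2)^2 := by
    calc ∑ i, y i^2 ≤ ∑ _i : Fin n, ((M - m)/2)^2 := by
          apply Finset.sum_le_sum
          intro i _
          have := (hb i).1
          have := (hb i).2
          have hlo : -((M - m)/2) ≤ y i := by simp only [hy, hc]; linarith
          have hhi : y i ≤ (M - m)/2 := by simp only [hy, hc]; linarith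
          exact sq_le_sq' hlo hhi
      _ = (n:ℝ) * ((M - m)/2)^2 := by
          rw [Finset.sum_const, card_univ, Fintype.card_fin, nsmul_eq_mul]
  have : 2 * ∑ e ∈ G.edgeFinset, F e ≤ 2*(n:ℝ)*((n:ℝ) * ((M - m)/2)^2) := by
    rw [← h1]
    calc ∑ d : G.Dart, F d.edge ≤ ∑ i, ∑ j, (y i - y j)^2 := h4 ▸ h3
      _ ≤ 2*(n:ℝ)*(∑ i, y i^2) := h5
      _ ≤ 2*(n:ℝ)*((n:ℝ) * ((M - m)/2)^2) := by
          apply mul_le_mul_of_nonneg_left h6 (by positivity)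
  nlinarith [this]

set_option maxHeartbeats 1000000 in
/-- if V(x̄) ≤ 4γ²·V(x̂)/(n²(n-1)) then 𝒱(x̄) ≤ γ·𝒱(x̂), for a connected
graph on n ≥ 2 vertices and 0 < γ < 1. -/
theorem V_calV_relation
    (n : ℕ) (hn : 2 ≤ n) (G : SimpleGraph (Fin n)) [DecidableRel G.Adj]
    (hconn : G.Connected) (γ : ℝ) (hγ0 : 0 < γ) (hγ1 : γ < 1)
    (xhat xbar : Fin n → ℝ)
    (hV : (1 / 2) * ∑ e ∈ G.edgeFinset,
            Sym2.lift ⟨fun i j => (xbar i - xbar j) ^ 2, fun i j => by ring⟩ e ≤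
          4 * γ ^ 2 *
            ((1 / 2) * ∑ e ∈ G.edgeFinset,
              Sym2.lift ⟨fun i j => (xhat i - xhat j) ^ 2, fun i j => by ring⟩ e) /
            ((n : ℝ) ^ 2 * ((n : ℝ) - 1))) :
    Finset.univ.sup' ⟨⟨0, by omega⟩, Finset.mem_univ _⟩ xbar -
        Finset.univ.inf' ⟨⟨0, by omega⟩, Finset.mem_univ _⟩ xbar ≤
      γ * (Finset.univ.sup' ⟨⟨0, by omega⟩, Finset.mem_univ _⟩ xhat -
           Finset.univ.inf' ⟨⟨0, by omega⟩, Finset.mem_univ _⟩ xhat) := by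
  classical
  set ne : (univ : Finset (Fin n)).Nonempty := ⟨⟨0, by omega⟩, Finset.mem_univ _⟩ with hne
  set N : ℝ := (n : ℝ) with hN
  have hN2 : (2:ℝ) ≤ N := by rw [hN]; exact_mod_cast hn
  set Qb : ℝ := ∑ e ∈ G.edgeFinset,
    Sym2.lift ⟨fun i j => (xbar i - xbar j) ^ 2, fun i j => by ring⟩ e with hQb
  set Qh : ℝ := ∑ e ∈ G.edgeFinset,
    Sym2.lift ⟨fun i j => (xhat i - xhat j) ^ 2, fun i j => by ring⟩ e with hQh
  set Sb : ℝ := Finset.univ.sup' ne xbar with hSb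
  set Ib : ℝ := Finset.univ.inf' ne xbar with hIb
  set Sh : ℝ := Finset.univ.sup' ne xhat with hSh
  set Ih : ℝ := Finset.univ.inf' ne xhat with hIh
  clear_value N Qb Qh Sb Ib Sh Ih
  obtain ⟨a, _, ha⟩ := Finset.exists_mem_eq_sup' ne xbar
  obtain ⟨b, _, hb⟩ := Finset.exists_mem_eq_inf' ne xbar
  -- lower bound for xbar
  have hA : (Sb - Ib)^2 ≤ (N - 1) * Qb := by
    rw [hSb, hIb, ha, hb, hQb, hN]
    exact lower_bound G hconn xbar a b
  -- upper bound for xhat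
  have hC : Qh ≤ N^2 * (Sh - Ih)^2 / 4 := by
    rw [hQh, hN]
    apply upper_bound G xhat Sh Ih
    intro i
    rw [hSh, hIh]
    exact ⟨Finset.inf'_le _ (Finset.mem_univ i), Finset.le_sup' _ (Finset.mem_univ i)⟩
  have hQbnn : 0 ≤ Qb := by
    rw [hQb]; exact Finset.sum_nonneg (fun e _ => F_nonneg xbar e)
  have hQhnn : 0 ≤ Qh := by
    rw [hQh]; exact Finset.sum_nonneg (fun e _ => F_nonneg xhat e)
  have hD : (0:ℝ) < N^2 * (N - 1) := by nlinarith
  have hB : Qb * (N^2 * (N - 1)) ≤ 4 * γ^2 * Qh := by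
    have := (le_div_iff₀ hD).mp hV
    nlinarith [this]
  have hVb : 0 ≤ Sb - Ib := by
    have h1 : Ib ≤ xbar a := by rw [hIb]; exact Finset.inf'_le _ (Finset.mem_univ a)
    have h2 : xbar a ≤ Sb := by rw [hSb]; exact Finset.le_sup' _ (Finset.mem_univ a)
    linarith
  have hVh : 0 ≤ Sh - Ih := by
    have h1 : Ih ≤ xhat a := by rw [hIh]; exact Finset.inf'_le _ (Finset.mem_univ a)
    have h2 : xhat a ≤ Sh := by rw [hSh]; exact Finset.le_sup' _ (Finset.mem_univ a)
    linarith
  have hsq : (Sb - Ib)^2 ≤ (γ * (Sh - Ih))^2 := by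
    have e1 : N^2 * (Sb - Ib)^2 ≤ N^2 * ((N - 1) * Qb) :=
      mul_le_mul_of_nonneg_left hA (by positivity)
    have e2 : N^2 * ((N - 1) * Qb) ≤ 4 * γ^2 * Qh := by nlinarith [hB]
    have e3 : 4 * γ^2 * Qh ≤ γ^2 * (N^2 * (Sh - Ih)^2) := by nlinarith [hC, sq_nonneg γ]
    have e4 : N^2 * (Sb - Ib)^2 ≤ N^2 * (γ * (Sh - Ih))^2 := by nlinarith [e1, e2, e3]
    have hNpos : (0:ℝ) < N^2 := by positivity
    exact le_of_mul_le_mul_left e4 hNpos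
  have hγV : 0 ≤ γ * (Sh - Ih) := mul_nonneg hγ0.le hVh
  exact (pow_le_pow_iff_left₀ hVb hγV two_ne_zero).mp hsq
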